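/- Let V be a real vector space, x₀, z ∈ V, t ∈ [0, π/2), and s = sin t / (sin t + cos t). Then cos(t)·x₀ + sin(t)·z = (1/√(s² + (1 − s)²)) · ((1 − s)·x₀ + s·z); that is, the TrigFlow noisy sample at time t equals the flow-matching noisy sample at time s rescaled by 1/√(s² + (1−s)²). -/

import Mathlib

open Real

/-- Let `V` be a real vector space, `x₀, z ∈ V`, `t ∈ [0, π/2)`, and
`s = sin t / (sin t + cos t)`. Then the TrigFlow noisy sample at time `t` equals the
flow-matching noisy sample at time `s` rescaled by `1/√(s² + (1 - s)²)`. -/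
theorem trig_sample_eq_rescaled_flow_sample {V : Type*} [AddCommGroup V] [Module ℝ V]
    (x₀ z : V) (t : ℝ) (ht : t ∈ Set.Ico 0 (π / 2))
    (s : ℝ) (hs : s = sin t / (sin t + cos t)) :
    cos t • x₀ + sin t • z =
      (1 / Real.sqrt (s ^ 2 + (1 - s) ^ 2)) • ((1 - s) • x₀ + s • z) := by
  obtain ⟨ht0, htlt⟩ := ht
  have hc : 0 < cos t := cos_pos_of_mem_Ioo ⟨by linarith [pi_pos], htlt⟩
  have hsn : 0 ≤ sin t := sin_nonneg_of_nonneg_of_le_pi ht0 (by linarith [pi_pos])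
  have hd : 0 < sin t + cos t := by linarith
  subst hs
  have hsum : (sin t / (sin t + cos t)) ^ 2 + (1 - sin t / (sin t + cos t)) ^ 2
      = (1 / (sin t + cos t)) ^ 2 := by
    field_simp
    linear_combination sin_sq_add_cos_sq t
  rw [hsum, Real.sqrt_sq (by positivity), one_div_one_div, smul_add, smul_smul, smul_smul]
  have h1 : (sin t + cos t) * (1 - sin t / (sin t + cos t)) = cos t := by
    field_simp
    ring
  have h2 : (sin t + cos t) * (sin t / (sin t + cos t)) = sin t := by
    field_simp
  rw [h1, h2, add_comm]
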